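/- For matrices, row-wise shrinkage: the matrix Y whose i-th row is max(1 − λ/‖Xᵢ‖₂, 0) · Xᵢ (and 0 if Xᵢ = 0) minimizes (1/2)‖Y − X‖_F² + λ‖Y‖₂₁ over all matrices Y, for λ > 0. -/

import Mathlib

lemma row_shrink_lemma (n : ℕ) (x z : Fin n → ℝ) (lam : ℝ) (hlam : 0 < lam) :
    (1/2) * (∑ j, ((if Real.sqrt (∑ j', (x j')^2) = 0 then 0
      else max (1 - lam / Real.sqrt (∑ j', (x j')^2)) 0 * x j) - x j)^2)
      + lam * Real.sqrt (∑ j, ((if Real.sqrt (∑ j', (x j')^2) = 0 then 0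
      else max (1 - lam / Real.sqrt (∑ j', (x j')^2)) 0 * x j))^2)
    ≤ (1/2) * (∑ j, (z j - x j)^2) + lam * Real.sqrt (∑ j, (z j)^2) := by
  set r := Real.sqrt (∑ j', (x j')^2) with hr
  set s := Real.sqrt (∑ j, (z j)^2) with hs
  have hxs : (0:ℝ) ≤ ∑ j', (x j')^2 := Finset.sum_nonneg fun _ _ => sq_nonneg _
  have hzs : (0:ℝ) ≤ ∑ j, (z j)^2 := Finset.sum_nonneg fun _ _ => sq_nonneg _
  have hr0 : 0 ≤ r := Real.sqrt_nonneg _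
  have hs0 : 0 ≤ s := Real.sqrt_nonneg _
  have hr2 : r^2 = ∑ j', (x j')^2 := Real.sq_sqrt hxs
  have hs2 : s^2 = ∑ j, (z j)^2 := Real.sq_sqrt hzs
  have hcs : ∑ j, z j * x j ≤ s * r := Real.sum_mul_le_sqrt_mul_sqrt _ _ _
  have hexp : ∑ j, (z j - x j)^2 = s^2 - 2 * (∑ j, z j * x j) + r^2 := by
    have e : ∀ j : Fin n, (z j - x j)^2 = z j^2 - 2*(z j * x j) + x j^2 := fun j => by ring
    rw [Finset.sum_congr rfl fun j _ => e j, Finset.sum_add_distrib, Finset.sum_sub_distrib,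
      ← Finset.mul_sum, hr2, hs2]
  by_cases h : r = 0
  · simp only [h, if_true]
    have hx0 : ∀ j, x j = 0 := by
      intro j
      have : ∑ j', (x j')^2 = 0 := by
        have := Real.sqrt_eq_zero hxs |>.mp h
        exact this
      have := (Finset.sum_eq_zero_iff_of_nonneg (fun i _ => sq_nonneg (x i))).mp this j
        (Finset.mem_univ j)
      exact pow_eq_zero_iff (by norm_num) |>.mp this
    have hrhs : (0:ℝ) ≤ (1/2) * (∑ j, (z j - x j)^2) + lam * s := by positivity
    simpa [hx0] using hrhs
  · have hrpos : 0 < r := lt_of_le_of_ne hr0 (Ne.symm h)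
    simp only [h, if_false]
    by_cases hc : r ≤ lam
    · have hmax : max (1 - lam / r) 0 = 0 := by
        apply max_eq_right
        have : 1 ≤ lam / r := (le_div_iff₀ hrpos).mpr (by linarith)
        linarith
      rw [hmax]
      have e1 : ∑ j, ((0:ℝ) * x j - x j)^2 = r^2 := by
        rw [hr2]; exact Finset.sum_congr rfl fun j _ => by ring
      have e2 : Real.sqrt (∑ j, ((0:ℝ) * x j)^2) = 0 := by simp
      rw [e1, e2, hexp]
      nlinarith [sq_nonneg s, mul_nonneg hs0 (sub_nonneg.mpr hc)]
    · push_neg at hc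
      have hcpos : 0 < 1 - lam / r := by
        rw [sub_pos, div_lt_one hrpos]; exact hc
      have hmax : max (1 - lam / r) 0 = 1 - lam / r := max_eq_left hcpos.le
      rw [hmax]
      set c := 1 - lam / r with hcdef
      have hsum1 : ∑ j, (c * x j - x j)^2 = (c-1)^2 * r^2 := by
        rw [hr2, Finset.mul_sum]; congr 1; ext j; ring
      have hsum2 : ∑ j, (c * x j)^2 = c^2 * r^2 := by
        rw [hr2, Finset.mul_sum]; congr 1; ext j; ring
      have hsqrt : Real.sqrt (∑ j, (c * x j)^2) = c * r := by
        rw [hsum2, ← mul_pow, Real.sqrt_sq (by positivity)]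
      rw [hsum1, hsqrt, hexp]
      have hcr : c * r = r - lam := by rw [hcdef, sub_mul, one_mul, div_mul_cancel₀ _ h]
      have h1 : (c-1)^2 * r^2 = lam^2 := by
        have : (c - 1) * r = -lam := by linear_combination hcr
        nlinarith [this]
      rw [h1, hcr]
      nlinarith [sq_nonneg (s - r + lam)]

theorem row_shrinkage_minimizes (m n : ℕ) (X : Fin m → Fin n → ℝ)
    (lam : ℝ) (hlam : 0 < lam) :
    let Y : Fin m → Fin n → ℝ := fun i j =>
      if Real.sqrt (∑ j', (X i j')^2) = 0 then 0
      else max (1 - lam / Real.sqrt (∑ j', (X i j')^2)) 0 * X i j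
    let f : (Fin m → Fin n → ℝ) → ℝ := fun Z =>
      (1/2) * (∑ i, ∑ j, (Z i j - X i j)^2) + lam * ∑ i, Real.sqrt (∑ j, (Z i j)^2)
    ∀ Z : Fin m → Fin n → ℝ, f Y ≤ f Z := by
  intro Y f Z
  have key : ∀ W : Fin m → Fin n → ℝ, f W =
      ∑ i, ((1/2) * (∑ j, (W i j - X i j)^2) + lam * Real.sqrt (∑ j, (W i j)^2)) := by
    intro W
    simp only [f, Finset.mul_sum, Finset.sum_add_distrib]
  rw [key Y, key Z]
  apply Finset.sum_le_sum
  intro i _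
  exact row_shrink_lemma n (X i) (Z i) lam hlam
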